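/- arXiv:1708.04350 — 3 statements merged into one kernel-verified Lean document; each statement's English description precedes it below -/
import Mathlib

section
/- Let H be a (d,m)-graph with edge set E, and let F be a uniformly random subset of E. Then the probability that F contains no (d+1)-clique of H is at most (1 − 2^{−(d+1)})^{m^d}. -/
open Finset

lemma count_avoid {α ι : Type*} [DecidableEq α] [DecidableEq ι] (k : ℕ)
    (I : Finset ι) (S : ι → Finset α) :
    ∀ (E : Finset α), (∀ v ∈ I, S v ⊆ E) →
    (∀ v ∈ I, ∀ w ∈ I, v ≠ w → Disjoint (S v) (S w)) →
    (∀ v ∈ I, (S v).card = k) →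
    (E.powerset.filter fun F => ∀ v ∈ I, ¬ S v ⊆ F).card ≤
      (2 ^ k - 1) ^ I.card * 2 ^ (E.card - k * I.card) := by
  induction I using Finset.induction_on with
  | empty =>
      intro E _ _ _
      simp only [Finset.notMem_empty, IsEmpty.forall_iff, forall_const, filter_true_of_mem,
        fun _ _ => trivial, card_empty, pow_zero, one_mul, Nat.mul_zero, Nat.sub_zero]
      calc (E.powerset.filter fun _ => ∀ v ∈ (∅ : Finset ι), ¬ S v ⊆ _).card
          ≤ E.powerset.card := card_filter_le _ _
        _ = 2 ^ E.card := card_powerset E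
  | @insert a I ha IH =>
      intro E hSE hdisj hk
      have hSaE : S a ⊆ E := hSE a (mem_insert_self a I)
      have hSak : (S a).card = k := hk a (mem_insert_self a I)
      have key : (E.powerset.filter fun F => ∀ v ∈ insert a I, ¬ S v ⊆ F).card ≤
          (((S a).powerset.erase (S a)) ×ˢ
            ((E \ S a).powerset.filter fun F => ∀ v ∈ I, ¬ S v ⊆ F)).card := by
        apply Finset.card_le_card_of_injOn (fun F => (F ∩ S a, F \ S a))
        · intro F hF
          simp only [mem_coe, mem_filter, mem_powerset] at hF
          obtain ⟨hFE, hav⟩ := hF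
          simp only [mem_coe, mem_product, mem_erase, mem_powerset, mem_filter]
          refine ⟨⟨?_, inter_subset_right⟩, ?_, ?_⟩
          · intro h
            exact hav a (mem_insert_self a I) (by rw [← h]; exact inter_subset_left)
          · exact sdiff_subset_sdiff hFE (le_refl _)
          · intro v hv hsub
            exact hav v (mem_insert_of_mem hv) (hsub.trans sdiff_subset)
        · intro F hF G hG h
          simp only [Prod.mk.injEq] at h
          have : F ∩ S a ∪ F \ S a = G ∩ S a ∪ G \ S a := by rw [h.1, h.2]
          have e : ∀ X : Finset α, X ∩ S a ∪ X \ S a = X := by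
            intro X; ext x; simp only [mem_union, mem_inter, mem_sdiff]; tauto
          rwa [e, e] at this
      rw [Finset.card_product, Finset.card_erase_of_mem (mem_powerset_self _),
        card_powerset, hSak] at key
      have hIH := IH (E \ S a)
        (fun v hv => subset_sdiff.2 ⟨hSE v (mem_insert_of_mem hv),
          hdisj v (mem_insert_of_mem hv) a (mem_insert_self a I) (fun h => ha (h ▸ hv))⟩)
        (fun v hv w hw hvw => hdisj v (mem_insert_of_mem hv) w (mem_insert_of_mem hw) hvw)
        (fun v hv => hk v (mem_insert_of_mem hv))
      rw [card_sdiff_of_subset hSaE, hSak] at hIH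
      calc _ ≤ (2 ^ k - 1) * (((E \ S a).powerset.filter fun F => ∀ v ∈ I, ¬ S v ⊆ F)).card := key
        _ ≤ (2 ^ k - 1) * ((2 ^ k - 1) ^ I.card * 2 ^ (E.card - k - k * I.card)) :=
            Nat.mul_le_mul_left _ hIH
        _ = (2 ^ k - 1) ^ (insert a I).card * 2 ^ (E.card - k * (insert a I).card) := by
            rw [card_insert_of_notMem ha, pow_succ, Nat.mul_succ, Nat.sub_sub,
              Nat.add_comm (k * I.card) k]
            ring

lemma count_avoid' {α ι : Type*} [DecidableEq α] [DecidableEq ι] (k : ℕ)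
    (I : Finset ι) (S : ι → Finset α) (E : Finset α) (P : Finset α → Prop) [DecidablePred P]
    (hSE : ∀ v ∈ I, S v ⊆ E)
    (hdisj : ∀ v ∈ I, ∀ w ∈ I, v ≠ w → Disjoint (S v) (S w))
    (hk : ∀ v ∈ I, (S v).card = k)
    (hP : ∀ F, P F → ∀ v ∈ I, ¬ S v ⊆ F) :
    (E.powerset.filter P).card ≤ (2 ^ k - 1) ^ I.card * 2 ^ (E.card - k * I.card) := by
  refine le_trans (Finset.card_le_card ?_) (count_avoid k I S E hSE hdisj hk)
  intro F hF
  rw [Finset.mem_filter] at hF ⊢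
  exact ⟨hF.1, hP F hF.2⟩

section Cliques
variable {d m : ℕ}

/-- The transversal of `v`. -/
def Tv (v : Fin (d+1) → Fin m) : Finset (Fin (d+1) × Fin m) :=
  Finset.univ.image (fun j => (j, v j))

/-- The clique of `v`: the `d+1` edges obtained by deleting one vertex. -/
def Cv (v : Fin (d+1) → Fin m) : Finset (Finset (Fin (d+1) × Fin m)) :=
  Finset.univ.image (fun i : Fin (d+1) => (Tv v).erase (i, v i))

lemma mem_Tv {v : Fin (d+1) → Fin m} {p : Fin (d+1) × Fin m} :
    p ∈ Tv v ↔ p.2 = v p.1 := by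
  simp only [Tv, mem_image, mem_univ, true_and]
  constructor
  · rintro ⟨j, rfl⟩; rfl
  · intro h; exact ⟨p.1, Prod.ext rfl h.symm⟩

lemma card_Tv (v : Fin (d+1) → Fin m) : (Tv v).card = d + 1 := by
  rw [Tv, card_image_of_injective _ (fun a b h => congrArg Prod.fst h), card_univ,
    Fintype.card_fin]

lemma Cv_subset_Edges (v : Fin (d+1) → Fin m) :
    Cv v ⊆ (Finset.univ : Finset (Fin (d+1) × Fin m)).powerset.filter
      (fun e => e.card = d ∧ ∀ i, (e.filter (fun x => x.1 = i)).card ≤ 1) := by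
  intro e he
  obtain ⟨i, _, rfl⟩ := mem_image.1 he
  rw [mem_filter, mem_powerset]
  refine ⟨subset_univ _, ?_, ?_⟩
  · rw [card_erase_of_mem (mem_Tv.2 rfl), card_Tv]; rfl
  · intro l
    have hsub : ((Tv v).erase (i, v i)).filter (fun x => x.1 = l) ⊆ {(l, v l)} := by
      intro x hx
      rw [mem_filter] at hx
      have h2 := mem_Tv.1 (mem_of_mem_erase hx.1)
      rw [mem_singleton]
      exact Prod.ext hx.2 (by rw [h2, hx.2])
    calc _ ≤ ({(l, v l)} : Finset _).card := card_le_card hsub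
      _ = 1 := card_singleton _

lemma card_Cv (v : Fin (d+1) → Fin m) : (Cv v).card = d + 1 := by
  have hinj : Function.Injective (fun i : Fin (d+1) => (Tv v).erase (i, v i)) := by
    intro i j h
    by_contra hij
    have h1 : (j, v j) ∈ (Tv v).erase (i, v i) :=
      mem_erase.2 ⟨fun he => hij (congrArg Prod.fst he).symm, mem_Tv.2 rfl⟩
    rw [show (Tv v).erase (i, v i) = (Tv v).erase (j, v j) from h] at h1
    exact notMem_erase _ _ h1
  rw [Cv, card_image_of_injective _ hinj, card_univ, Fintype.card_fin]

lemma share_edge {v w : Fin (d+1) → Fin m} {e : Finset (Fin (d+1) × Fin m)}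
    (hv : e ∈ Cv v) (hw : e ∈ Cv w) : ∃ i, ∀ j, j ≠ i → v j = w j := by
  obtain ⟨i, _, rfl⟩ := mem_image.1 hv
  obtain ⟨j, _, hj⟩ := mem_image.1 hw
  have hij : j = i := by
    by_contra hij
    have h1 : (j, v j) ∈ (Tv v).erase (i, v i) :=
      mem_erase.2 ⟨fun he => hij (congrArg Prod.fst he), mem_Tv.2 rfl⟩
    rw [← hj] at h1
    obtain ⟨hne, hmem⟩ := mem_erase.1 h1
    exact hne (Prod.ext rfl (mem_Tv.1 hmem))
  subst hij
  refine ⟨j, fun l hl => ?_⟩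
  have h1 : (l, v l) ∈ (Tv v).erase (j, v j) :=
    mem_erase.2 ⟨fun he => hl (congrArg Prod.fst he), mem_Tv.2 rfl⟩
  rw [← hj] at h1
  exact mem_Tv.1 (mem_of_mem_erase h1)

end Cliques

/-- In a `(d,m)`-graph with edge set `Edges`, the probability that a uniformly random
subset `F` of the edges contains no `(d+1)`-clique is at most `(1 - 2⁻¹ ^ (d+1)) ^ (m ^ d)`. -/
theorem stmt3 (d m : ℕ) (hd : 1 ≤ d) :
    let Edges := (Finset.univ : Finset (Fin (d+1) × Fin m)).powerset.filter
      (fun e => e.card = d ∧ ∀ i, (e.filter (fun x => x.1 = i)).card ≤ 1)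
    ((Edges.powerset.filter (fun F => ¬ ∃ v : Fin (d+1) → Fin m,
        Finset.univ.image (fun i : Fin (d+1) =>
          (Finset.univ.image (fun j => (j, v j))).erase (i, v i)) ⊆ F)).card : ℝ)
      / 2 ^ Edges.card
      ≤ (1 - (1 : ℝ) / 2 ^ (d+1)) ^ (m ^ d) := by
  intro Edges
  have hEdges : Edges = (Finset.univ : Finset (Fin (d+1) × Fin m)).powerset.filter
      (fun e => e.card = d ∧ ∀ i, (e.filter (fun x => x.1 = i)).card ≤ 1) := rfl
  clear_value Edges
  have hCveqE : ∀ v : Fin (d+1) → Fin m, Cv v ⊆ Edges := by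
    intro v; rw [hEdges]; exact Cv_subset_Edges v
  have hCveq : ∀ v : Fin (d+1) → Fin m,
      Finset.univ.image (fun i : Fin (d+1) =>
        (Finset.univ.image (fun j => (j, v j))).erase (i, v i)) = Cv v := fun v => rfl
  by_cases hm : m = 0
  · subst hm
    rw [zero_pow (by omega), pow_zero]
    apply div_le_one_of_le₀
    · calc ((Edges.powerset.filter _).card : ℝ) ≤ (Edges.powerset.card : ℝ) := by
            exact_mod_cast Finset.card_le_card (Finset.filter_subset _ _)
        _ = 2 ^ Edges.card := by rw [Finset.card_powerset]; push_cast; ring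
    · positivity
  · haveI : NeZero m := ⟨hm⟩
    obtain ⟨I, hI⟩ : ∃ I : Finset (Fin (d+1) → Fin m),
        I = Finset.univ.filter (fun v => ∑ i, ((v i : ℕ) : ZMod m) = 0) := ⟨_, rfl⟩
    have hI0 : ∀ v ∈ I, ∑ i, ((v i : ℕ) : ZMod m) = 0 := by
      intro v hv
      rw [hI, Finset.mem_filter] at hv
      exact hv.2
    -- disjointness
    have hdisj : ∀ v ∈ I, ∀ w ∈ I, v ≠ w → Disjoint (Cv v) (Cv w) := by
      intro v hv w hw hvw
      rw [Finset.disjoint_left]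
      intro e hev hew
      obtain ⟨i, hagree⟩ := share_edge hev hew
      apply hvw
      funext l
      by_cases hl : l = i
      · subst hl
        have hsum : ∑ j, ((v j : ℕ) : ZMod m) = ∑ j, ((w j : ℕ) : ZMod m) := by
          rw [hI0 v hv, hI0 w hw]
        rw [← Finset.add_sum_erase _ _ (Finset.mem_univ l),
          ← Finset.add_sum_erase _ _ (Finset.mem_univ l)] at hsum
        have htail : ∑ j ∈ Finset.univ.erase l, ((v j : ℕ) : ZMod m)
            = ∑ j ∈ Finset.univ.erase l, ((w j : ℕ) : ZMod m) :=
          Finset.sum_congr rfl (fun j hj => by rw [hagree j (Finset.mem_erase.1 hj).1])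
        rw [htail] at hsum
        have hcast : ((v l : ℕ) : ZMod m) = ((w l : ℕ) : ZMod m) :=
          add_right_cancel hsum
        have : (v l : ℕ) = (w l : ℕ) := by
          rw [← ZMod.val_cast_of_lt (v l).isLt, ← ZMod.val_cast_of_lt (w l).isLt, hcast]
        exact Fin.ext this
      · exact hagree l hl
    -- cardinality of I
    have hIcard : I.card = m ^ d := by
      have : I.card = (Finset.univ : Finset (Fin d → Fin m)).card := by
        apply Finset.card_nbij' (fun v => v ∘ Fin.castSucc)
          (fun g => Fin.snoc g ⟨(-(∑ i, ((g i : ℕ) : ZMod m))).val, ZMod.val_lt _⟩)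
        · intro v _; exact Finset.mem_univ _
        · intro g _
          rw [hI, Finset.mem_coe, Finset.mem_filter]
          refine ⟨Finset.mem_univ _, ?_⟩
          rw [Fin.sum_univ_castSucc]
          simp only [Fin.snoc_castSucc, Fin.snoc_last]
          rw [ZMod.natCast_rightInverse _]
          ring
        · intro v hv
          funext l
          refine Fin.lastCases ?_ (fun i => ?_) l
          · beta_reduce; rw [Fin.snoc_last]
            have hv0 := hI0 v hv
            rw [Fin.sum_univ_castSucc] at hv0
            have : (-(∑ i : Fin d, (((v ∘ Fin.castSucc) i : ℕ) : ZMod m)))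
                = ((v (Fin.last d) : ℕ) : ZMod m) := by
              rw [neg_eq_iff_add_eq_zero]
              exact hv0
            apply Fin.ext
            show (-(∑ i : Fin d, (((v ∘ Fin.castSucc) i : ℕ) : ZMod m))).val = (v (Fin.last d) : ℕ)
            rw [this, ZMod.val_cast_of_lt (v (Fin.last d)).isLt]
          · beta_reduce; rw [Fin.snoc_castSucc]; rfl
        · intro g _
          funext i
          exact Fin.snoc_castSucc (α := fun _ => Fin m) _ g i
      rw [this, Finset.card_univ, Fintype.card_fun, Fintype.card_fin, Fintype.card_fin]
    -- the counting bound
    -- edge count lower bound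
    have hle : (d+1) * m ^ d ≤ Edges.card := by
      have hsub : I.biUnion Cv ⊆ Edges := Finset.biUnion_subset.2 fun v _ => hCveqE v
      have hcard : (I.biUnion Cv).card = (d+1) * m ^ d := by
        rw [Finset.card_biUnion hdisj]
        rw [Finset.sum_congr rfl (fun v _ => card_Cv v), Finset.sum_const, hIcard,
          smul_eq_mul, mul_comm]
      rw [← hcard]
      exact Finset.card_le_card hsub
    -- real arithmetic
    rw [div_le_iff₀ (by positivity)]
    have h2 : (2:ℝ) ^ Edges.card = 2 ^ (Edges.card - (d+1) * m ^ d) * 2 ^ ((d+1) * m ^ d) := by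
      rw [← pow_add, Nat.sub_add_cancel hle]
    have hc1 : ((2 ^ (d+1) - 1 : ℕ) : ℝ) = 2 ^ (d+1) - 1 := by
      have : 1 ≤ 2 ^ (d+1) := Nat.one_le_two_pow
      push_cast [this]
      ring
    have hq : (((2 ^ (d+1) - 1) ^ (m ^ d) * 2 ^ (Edges.card - (d+1) * m ^ d) : ℕ) : ℝ)
        = (1 - (1:ℝ) / 2 ^ (d+1)) ^ (m ^ d) * 2 ^ Edges.card := by
      rw [Nat.cast_mul, Nat.cast_pow, Nat.cast_pow, hc1, Nat.cast_ofNat, h2, pow_mul]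
      have h0 : (2:ℝ) ^ (d+1) ≠ 0 := by positivity
      have h3 : (1 - (1:ℝ) / 2 ^ (d+1)) = (2 ^ (d+1) - 1) / 2 ^ (d+1) := by
        field_simp
      rw [h3, div_pow]
      field_simp
    refine le_trans ?_ (le_of_eq hq)
    rw [Nat.cast_le, ← hIcard]
    exact count_avoid' (d+1) I Cv Edges _ (fun v _ => hCveqE v) hdisj (fun v _ => card_Cv v)
      (fun F hF v _ hsubv => hF ⟨v, by rw [hCveq]; exact hsubv⟩)
end

section
/- For every n ≥ 2 and d ≥ 2, every (d,n)-graph admits a 2-coloring of its edges such that for m = ⌈25 (log n)^{1/(d−1)}⌉, every (d,m)-subgraph (induced by choosing m vertices in each part) contains a monochromatic (d+1)-clique in each of the two colors. -/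
open Finset

lemma avoid_count {E : Type*} [Fintype E] {ι : Type*} [Fintype ι]
    (s : ℕ) (g : ι × Fin s → E) (hg : Function.Injective g) (b : Bool) :
    Nat.card {χ : E → Bool // ∀ a : ι, ∃ i, χ (g (a, i)) ≠ b} * 2 ^ (s * Fintype.card ι)
      = (2 ^ s - 1) ^ Fintype.card ι * 2 ^ Fintype.card E := by
  classical
  set p : E → Prop := fun x => x ∈ Set.range g with hp
  let e1 : ({x : E // p x} → Bool) ≃ (ι × Fin s → Bool) :=
    Equiv.arrowCongr (Equiv.ofInjective g hg).symm (Equiv.refl _)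
  let e0 : (E → Bool) ≃ ((ι × Fin s → Bool) × ({x : E // ¬ p x} → Bool)) :=
    (Equiv.piEquivPiSubtypeProd p (fun _ => Bool)).trans (Equiv.prodCongr e1 (Equiv.refl _))
  have he0 : ∀ (χ : E → Bool) (a : ι) (i : Fin s), (e0 χ).1 (a, i) = χ (g (a, i)) := by
    intro χ a i; rfl
  have hle : s * Fintype.card ι ≤ Fintype.card E := by
    have := Fintype.card_le_of_injective g hg
    simpa [Fintype.card_prod, mul_comm] using this
  have c1 : Nat.card {χ : E → Bool // ∀ a : ι, ∃ i, χ (g (a, i)) ≠ b}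
      = Nat.card {F : ι × Fin s → Bool // ∀ a : ι, ∃ i, F (a, i) ≠ b}
        * Nat.card ({x : E // ¬ p x} → Bool) := by
    rw [← Nat.card_prod]
    refine Nat.card_congr (((Equiv.subtypeEquiv e0 (fun χ => ?_)).trans
      Equiv.prodSubtypeFstEquivSubtypeProd))
    simp only [he0]
  have c2 : Nat.card {F : ι × Fin s → Bool // ∀ a : ι, ∃ i, F (a, i) ≠ b}
      = (2 ^ s - 1) ^ Fintype.card ι := by
    have e2 : {F : ι × Fin s → Bool // ∀ a : ι, ∃ i, F (a, i) ≠ b}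
        ≃ ∀ _a : ι, {h : Fin s → Bool // ∃ i, h i ≠ b} :=
      (Equiv.subtypeEquiv (q := fun G : ι → Fin s → Bool => ∀ a : ι, ∃ i, G a i ≠ b)
        (Equiv.curry ι (Fin s) Bool) (fun F => Iff.rfl)).trans
        (Equiv.subtypePiEquivPi (β := fun _ : ι => Fin s → Bool) (p := fun _ h => ∃ i, h i ≠ b))
    rw [Nat.card_congr e2, Nat.card_pi]
    have hone : Nat.card {h : Fin s → Bool // ∃ i, h i ≠ b} = 2 ^ s - 1 := by
      have e3 : {h : Fin s → Bool // ∃ i, h i ≠ b}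
          ≃ {h : Fin s → Bool // ¬ (h = fun _ => b)} := by
        refine Equiv.subtypeEquiv (Equiv.refl _) (fun h => ?_)
        simp [funext_iff, not_forall]
      rw [Nat.card_congr e3, Nat.card_eq_fintype_card, Fintype.card_subtype_compl,
        Fintype.card_subtype_eq, Fintype.card_fun]
      simp
    rw [hone, Finset.prod_const, Finset.card_univ]
  have c3 : Nat.card ({x : E // ¬ p x} → Bool)
      = 2 ^ (Fintype.card E - s * Fintype.card ι) := by
    rw [Nat.card_fun, Nat.card_eq_fintype_card, Nat.card_eq_fintype_card,
      Fintype.card_subtype_compl, Fintype.card_bool]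
    congr 1
    congr 1
    rw [← Fintype.card_congr (Equiv.ofInjective g hg), Fintype.card_prod, Fintype.card_fin,
      mul_comm]
  rw [c1, c2, c3, mul_assoc, ← pow_add, Nat.sub_add_cancel hle]


variable {d n m : ℕ}

def cedge (w : Fin (d+1) → Fin m → Fin n) (a : Fin (d+1) → Fin m) (i : Fin (d+1)) :
    Finset (Fin (d+1) × Fin n) :=
  (Finset.univ.image (fun j => (j, w j (a j)))).erase (i, w i (a i))

lemma mem_cedge (w : Fin (d+1) → Fin m → Fin n) (a : Fin (d+1) → Fin m) (i j : Fin (d+1))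
    (x : Fin n) : (j, x) ∈ cedge w a i ↔ j ≠ i ∧ x = w j (a j) := by
  simp only [cedge, Finset.mem_erase, Finset.mem_image, Finset.mem_univ, true_and,
    Prod.mk.injEq, Ne, not_and]
  constructor
  · rintro ⟨hne, k, hk1, hk2⟩
    subst hk1; subst hk2
    refine ⟨fun hji => ?_, rfl⟩
    subst hji
    exact hne rfl rfl
  · rintro ⟨hji, rfl⟩
    exact ⟨fun h => absurd h hji, j, rfl, rfl⟩

lemma cedge_inj [NeZero m] (w : Fin (d+1) → Fin m → Fin n)
    (hw : ∀ i, Function.Injective (w i)) {a a' : Fin (d+1) → Fin m}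
    (ha : ∑ i, ((a i : ℕ) : ZMod m) = 0) (ha' : ∑ i, ((a' i : ℕ) : ZMod m) = 0)
    {i i' : Fin (d+1)} (h : cedge w a i = cedge w a' i') : a = a' ∧ i = i' := by
  have hii : i = i' := by
    by_contra hne
    have h1 : (i', w i' (a i')) ∈ cedge w a i :=
      (mem_cedge w a i i' _).mpr ⟨fun hc => hne hc.symm, rfl⟩
    rw [h] at h1
    exact ((mem_cedge w a' i' i' _).mp h1).1 rfl
  subst hii
  have haj : ∀ j, j ≠ i → a j = a' j := by
    intro j hj
    have h1 : (j, w j (a j)) ∈ cedge w a i := (mem_cedge w a i j _).mpr ⟨hj, rfl⟩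
    rw [h] at h1
    exact hw j ((mem_cedge w a' i j _).mp h1).2
  have hai : a i = a' i := by
    have hs : ∑ j ∈ Finset.univ.erase i, ((a j : ℕ) : ZMod m)
        = ∑ j ∈ Finset.univ.erase i, ((a' j : ℕ) : ZMod m) :=
      Finset.sum_congr rfl fun j hj => by rw [haj j (Finset.mem_erase.mp hj).1]
    have e1 := Finset.add_sum_erase Finset.univ (fun j => ((a j : ℕ) : ZMod m)) (mem_univ i)
    have e2 := Finset.add_sum_erase Finset.univ (fun j => ((a' j : ℕ) : ZMod m)) (mem_univ i)
    rw [ha] at e1; rw [ha'] at e2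
    have h2 : ((a i : ℕ) : ZMod m) = ((a' i : ℕ) : ZMod m) := by
      have := e1.trans e2.symm
      rw [hs] at this
      exact add_right_cancel this
    have := congrArg ZMod.val h2
    rw [ZMod.val_cast_of_lt (a i).isLt, ZMod.val_cast_of_lt (a' i).isLt] at this
    exact Fin.ext this
  refine ⟨funext fun j => ?_, rfl⟩
  by_cases hj : j = i
  · subst hj; exact hai
  · exact haj j hj

lemma card_zerosum (d m : ℕ) [NeZero m] :
    m ^ d ≤ Nat.card {a : Fin (d+1) → Fin m // ∑ i, ((a i : ℕ) : ZMod m) = 0} := by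
  classical
  have hinj : Function.Injective (fun f : Fin d → Fin m =>
      (⟨Fin.snoc f ⟨(-(∑ j, ((f j : ℕ) : ZMod m))).val, ZMod.val_lt _⟩, by
        rw [Fin.sum_univ_castSucc]
        simp only [Fin.snoc_castSucc, Fin.snoc_last]
        rw [ZMod.natCast_zmod_val]
        ring⟩ :
        {a : Fin (d+1) → Fin m // ∑ i, ((a i : ℕ) : ZMod m) = 0})) := by
    intro f f' hff
    funext j
    have := congrFun (congrArg Subtype.val hff) (Fin.castSucc j)
    dsimp only at this
    rwa [Fin.snoc_castSucc, Fin.snoc_castSucc] at this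
  calc m ^ d = Nat.card (Fin d → Fin m) := by
        rw [Nat.card_fun, Nat.card_eq_fintype_card, Nat.card_eq_fintype_card,
          Fintype.card_fin, Fintype.card_fin]
    _ ≤ _ := Nat.card_le_card_of_injective _ hinj


lemma pow25 (k : ℕ) : 2 ^ (k + 3) * (k + 3) + 2 ^ k ≤ 25 ^ (k + 1) := by
  induction k with
  | zero => norm_num
  | succ k ih =>
    have h1 : 2 ^ (k + 1 + 3) * (k + 1 + 3) + 2 ^ (k + 1)
        ≤ 25 * (2 ^ (k + 3) * (k + 3) + 2 ^ k) := by
      have hp : 2 ^ (k + 1 + 3) = 2 * 2 ^ (k + 3) := by ring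
      have hq : (2:ℕ) ^ (k + 1) = 2 * 2 ^ k := by ring
      rw [hp, hq]
      nlinarith [pow_pos (n := k) (a := 2) (by norm_num : (0:ℕ) < 2),
        pow_pos (n := k+3) (a := 2) (by norm_num : (0:ℕ) < 2)]
    calc 2 ^ (k + 1 + 3) * (k + 1 + 3) + 2 ^ (k + 1)
        ≤ 25 * (2 ^ (k + 3) * (k + 3) + 2 ^ k) := h1
      _ ≤ 25 * 25 ^ (k + 1) := Nat.mul_le_mul_left _ ih
      _ = 25 ^ (k + 1 + 1) := by ring

lemma pow25' (d : ℕ) (hd : 2 ≤ d) : 2 ^ (d + 1) * (d + 1) + 2 ^ (d - 2) ≤ 25 ^ (d - 1) := by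
  obtain ⟨k, rfl⟩ : ∃ k, d = k + 2 := ⟨d - 2, by omega⟩
  have := pow25 k
  have h1 : k + 2 + 1 = k + 3 := by omega
  have h2 : k + 2 - 2 = k := by omega
  have h3 : k + 2 - 1 = k + 1 := by omega
  rw [h1, h2, h3]
  exact this

lemma core_real (d n m : ℕ) (hd : 2 ≤ d) (hn : 2 ≤ n)
    (hm : 25 * Real.log n ^ ((1 : ℝ) / ((d : ℝ) - 1)) ≤ (m : ℝ)) :
    2 * ((n : ℝ) ^ m) ^ (d + 1) * ((2 : ℝ) ^ (d + 1) - 1) ^ (m ^ d)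
      < (2 : ℝ) ^ ((d + 1) * m ^ d) := by
  have hn1 : (1 : ℝ) < (n : ℝ) := by exact_mod_cast hn.trans_lt' one_lt_two
  have hn0 : (0 : ℝ) < (n : ℝ) := by positivity
  set L := Real.log n with hLdef
  have hL2 : Real.log 2 ≤ L := Real.log_le_log (by norm_num) (by exact_mod_cast hn)
  have hlog2 : (0.6931471803 : ℝ) < Real.log 2 := Real.log_two_gt_d9
  have hlog2' : Real.log 2 < 1 := by
    have := Real.log_two_lt_d9
    linarith
  have hL0 : (0 : ℝ) < L := by linarith
  have hdR : (2 : ℝ) ≤ (d : ℝ) := by exact_mod_cast hd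
  have hd1 : (0 : ℝ) < (d : ℝ) - 1 := by linarith
  set e := (1 : ℝ) / ((d : ℝ) - 1) with hedef
  have he0 : 0 < e := by positivity
  have he1 : e ≤ 1 := by
    rw [hedef, div_le_one hd1]; linarith
  have hLe : Real.log 2 ≤ L ^ e := by
    rcases le_or_gt 1 L with hL1 | hL1
    · have : (1 : ℝ) ≤ L ^ e := Real.one_le_rpow hL1 he0.le
      linarith
    · have h := Real.rpow_le_rpow_of_exponent_ge hL0 hL1.le he1
      rw [Real.rpow_one] at h
      linarith
  have hLe0 : (0:ℝ) ≤ L ^ e := by positivity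
  have hm25 : 25 * Real.log 2 ≤ (m : ℝ) := by nlinarith
  have hm0 : (0 : ℝ) < (m : ℝ) := by nlinarith
  have hmnat : 1 ≤ m := by
    by_contra hc
    push_neg at hc
    interval_cases m
    · norm_num at hm0
  have hcast : ((d - 1 : ℕ) : ℝ) = (d : ℝ) - 1 := by
    have h1 : 1 ≤ d := by omega
    push_cast [Nat.cast_sub h1]
    ring
  have h3 : ((L ^ e) ^ ((d - 1 : ℕ))) = L := by
    rw [← Real.rpow_natCast (L ^ e) (d - 1), ← Real.rpow_mul hL0.le, hcast, hedef,
      one_div_mul_cancel hd1.ne', Real.rpow_one]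
  have hpow : 25 ^ (d - 1) * L ≤ (m : ℝ) ^ (d - 1) := by
    have h1 : (25 * L ^ e) ^ (d - 1) ≤ (m : ℝ) ^ (d - 1) :=
      pow_le_pow_left₀ (by positivity) hm _
    have h2 : (25 * L ^ e) ^ (d - 1) = 25 ^ (d - 1) * L := by
      rw [mul_pow, h3]
    linarith [h2 ▸ h1]
  have hmL : 8 * Real.log 2 ≤ (m : ℝ) * L := by nlinarith
  have h25 : ((2:ℝ) ^ (d+1) * ((d:ℝ)+1) + 2 ^ (d-2)) ≤ 25 ^ (d-1) := by
    have := pow25' d hd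
    have := (Nat.cast_le (α := ℝ)).mpr this
    push_cast at this
    convert this using 2 <;> norm_num
  have h8 : (2:ℝ) ^ (d - 2) * 8 = 2 ^ (d + 1) := by
    rw [show (8:ℝ) = 2^3 by norm_num, ← pow_add]
    congr 1
    omega
  have hmd : 2 ^ (d+1) * (Real.log 2 + ((d:ℝ)+1) * ((m:ℝ) * L)) ≤ (m:ℝ) ^ d := by
    have hdd : d - 1 + 1 = d := by omega
    have h1 : (m:ℝ) ^ d = (m:ℝ)^(d-1) * m := by rw [← pow_succ, hdd]
    have h2 : (25:ℝ)^(d-1) * L * m ≤ (m:ℝ)^(d-1) * m :=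
      mul_le_mul_of_nonneg_right hpow hm0.le
    have h3' : 2 ^ (d+1) * Real.log 2 ≤ (m:ℝ) * L * 2^(d-2) := by
      calc (2:ℝ)^(d+1) * Real.log 2 = 2^(d-2) * (8 * Real.log 2) := by rw [← h8]; ring
        _ ≤ 2^(d-2) * ((m:ℝ)*L) := mul_le_mul_of_nonneg_left hmL (by positivity)
        _ = (m:ℝ) * L * 2^(d-2) := by ring
    have h4 : (m:ℝ)*L*(2^(d+1)*((d:ℝ)+1)) + (m:ℝ)*L*2^(d-2) ≤ (m:ℝ)*L*25^(d-1) := by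
      have := mul_le_mul_of_nonneg_left h25 (show (0:ℝ) ≤ (m:ℝ)*L by positivity)
      calc (m:ℝ)*L*(2^(d+1)*((d:ℝ)+1)) + (m:ℝ)*L*2^(d-2)
          = (m:ℝ)*L*((2:ℝ)^(d+1)*((d:ℝ)+1) + 2^(d-2)) := by ring
        _ ≤ (m:ℝ)*L*25^(d-1) := this
    calc 2^(d+1)*(Real.log 2 + ((d:ℝ)+1)*((m:ℝ)*L))
        = 2^(d+1)*Real.log 2 + (m:ℝ)*L*(2^(d+1)*((d:ℝ)+1)) := by ring
      _ ≤ (m:ℝ)*L*2^(d-2) + (m:ℝ)*L*(2^(d+1)*((d:ℝ)+1)) := by linarith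
      _ ≤ (m:ℝ)*L*25^(d-1) := by linarith
      _ = 25^(d-1)*L*m := by ring
      _ ≤ (m:ℝ)^(d-1)*m := h2
      _ = (m:ℝ)^d := h1.symm
  set A := (2:ℝ)^(d+1) with hA
  have hA4 : (4:ℝ) ≤ A := by
    rw [hA]
    calc (4:ℝ) = 2^2 := by norm_num
      _ ≤ 2^(d+1) := by
        apply pow_le_pow_right₀ (by norm_num)
        omega
  have hA0 : (0:ℝ) < A := by rw [hA]; positivity
  have hAinv0 : (0:ℝ) < A⁻¹ := by positivity
  have hAinv1 : A⁻¹ ≤ 1 := by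
    rw [inv_le_one_iff₀]
    right; linarith
  set M := m ^ d with hM
  have hM1 : 1 ≤ M := Nat.one_le_pow d m (by omega)
  have hstep1 : (A - 1)^M = A^M * (1 - A⁻¹)^M := by
    rw [← mul_pow]
    congr 1
    field_simp
  have hlt : (1 - A⁻¹) < Real.exp (-A⁻¹) := by
    have := Real.add_one_lt_exp (x := -A⁻¹) (by simp [hAinv0.ne'])
    linarith
  have hpos1 : (0:ℝ) ≤ 1 - A⁻¹ := by linarith
  have hstep2 : (1 - A⁻¹)^M < Real.exp (-A⁻¹)^M :=
    pow_lt_pow_left₀ hlt hpos1 (by omega)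
  have hstep3 : Real.exp (-A⁻¹) ^ M = Real.exp (-((M:ℝ) * A⁻¹)) := by
    rw [← Real.exp_nat_mul]
    congr 1
    ring
  have hMA : Real.log 2 + ((d:ℝ)+1)*((m:ℝ)*L) ≤ (M:ℝ) * A⁻¹ := by
    have hMc : (M:ℝ) = (m:ℝ)^d := by rw [hM]; push_cast; ring
    rw [hMc, ← div_eq_mul_inv, le_div_iff₀ hA0]
    calc (Real.log 2 + ((d:ℝ)+1)*((m:ℝ)*L)) * A
        = A * (Real.log 2 + ((d:ℝ)+1)*((m:ℝ)*L)) := by ring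
      _ ≤ (m:ℝ)^d := hmd
  have hstep4 : Real.exp (-((M:ℝ) * A⁻¹))
      ≤ Real.exp (-(Real.log 2 + ((d:ℝ)+1)*((m:ℝ)*L))) := by
    rw [Real.exp_le_exp]
    linarith
  have hstep5 : Real.exp (-(Real.log 2 + ((d:ℝ)+1)*((m:ℝ)*L)))
      = (2 * ((n:ℝ)^m)^(d+1))⁻¹ := by
    rw [Real.exp_neg]
    congr 1
    rw [Real.exp_add, Real.exp_log (by norm_num : (0:ℝ) < 2)]
    congr 1
    have hmm : ((d:ℝ)+1) * ((m:ℝ)*L) = (((d+1)*m : ℕ) : ℝ) * L := by push_cast; ring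
    rw [hmm, Real.exp_nat_mul, Real.exp_log hn0, mul_comm (d+1) m, pow_mul]
  have hnm0 : (0:ℝ) < 2 * ((n:ℝ)^m)^(d+1) := by positivity
  calc 2 * ((n : ℝ) ^ m) ^ (d + 1) * (A - 1) ^ M
      = 2 * ((n:ℝ)^m)^(d+1) * (A^M * (1 - A⁻¹)^M) := by rw [hstep1]
    _ < 2 * ((n:ℝ)^m)^(d+1) * (A^M * Real.exp (-A⁻¹)^M) := by
        apply mul_lt_mul_of_pos_left _ hnm0
        exact mul_lt_mul_of_pos_left hstep2 (by positivity)
    _ ≤ 2 * ((n:ℝ)^m)^(d+1) * (A^M * (2 * ((n:ℝ)^m)^(d+1))⁻¹) := by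
        apply mul_le_mul_of_nonneg_left _ hnm0.le
        apply mul_le_mul_of_nonneg_left _ (by positivity)
        calc Real.exp (-A⁻¹) ^ M = Real.exp (-((M:ℝ) * A⁻¹)) := hstep3
          _ ≤ Real.exp (-(Real.log 2 + ((d:ℝ)+1)*((m:ℝ)*L))) := hstep4
          _ = (2 * ((n:ℝ)^m)^(d+1))⁻¹ := hstep5
    _ = A ^ M := by field_simp
    _ = 2 ^ ((d+1) * M) := by rw [hA, ← pow_mul]

lemma core_nat (d n m t : ℕ) (hd : 2 ≤ d) (hn : 2 ≤ n)
    (hm : 25 * Real.log n ^ ((1 : ℝ) / ((d : ℝ) - 1)) ≤ (m : ℝ)) (ht : m ^ d ≤ t) :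
    2 * (n.choose m) ^ (d + 1) * (2 ^ (d + 1) - 1) ^ t < 2 ^ ((d + 1) * t) := by
  have h1 : (1:ℕ) ≤ 2 ^ (d+1) := Nat.one_le_two_pow
  have base : 2 * (n ^ m) ^ (d+1) * (2^(d+1) - 1) ^ (m^d) < 2 ^ ((d+1) * (m^d)) := by
    rw [← Nat.cast_lt (α := ℝ)]
    push_cast [h1]
    exact core_real d n m hd hn hm
  have hc : n.choose m ≤ n ^ m := Nat.choose_le_pow n m
  obtain ⟨r, rfl⟩ : ∃ r, t = m^d + r := ⟨t - m^d, by omega⟩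
  have hpos : 0 < ((2:ℕ)^(d+1) - 1) ^ r := by
    apply Nat.pow_pos
    omega
  calc 2 * n.choose m ^ (d+1) * (2^(d+1)-1)^(m^d + r)
      = (2 * n.choose m ^ (d+1) * (2^(d+1)-1)^(m^d)) * (2^(d+1)-1)^r := by
        rw [pow_add]; ring
    _ ≤ (2 * (n^m) ^ (d+1) * (2^(d+1)-1)^(m^d)) * (2^(d+1)-1)^r := by gcongr
    _ < 2^((d+1)*(m^d)) * (2^(d+1)-1)^r := by
        exact Nat.mul_lt_mul_of_lt_of_le base (le_refl _) hpos
    _ ≤ 2^((d+1)*(m^d)) * (2^(d+1))^r := by gcongr; omega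
    _ = 2^((d+1)*(m^d+r)) := by rw [← pow_mul, ← pow_add]; ring_nf


open Finset

/-- Every `(d,n)`-graph admits a 2-coloring `χ` of its edges such that, with
`m = ⌈25 (log n)^(1/(d-1))⌉`, every `(d,m)`-subgraph (induced by sets `P i` of `m`
vertices in each part) contains, for each of the two colors, a monochromatic
`(d+1)`-clique of that color. -/
theorem stmt4 (d n : ℕ) (hd : 2 ≤ d) (hn : 2 ≤ n) :
    ∃ χ : Finset (Fin (d+1) × Fin n) → Bool,
      ∀ P : Fin (d+1) → Finset (Fin n),
        (∀ i, (P i).card = ⌈(25 : ℝ) * Real.log n ^ ((1 : ℝ) / ((d : ℝ) - 1))⌉₊) →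
        ∀ b : Bool, ∃ v : Fin (d+1) → Fin n,
          (∀ i, v i ∈ P i) ∧
          ∀ i : Fin (d+1),
            χ ((Finset.univ.image (fun j => (j, v j))).erase (i, v i)) = b := by
  classical
  set m := ⌈(25 : ℝ) * Real.log n ^ ((1 : ℝ) / ((d : ℝ) - 1))⌉₊ with hmdef
  have hm : 25 * Real.log n ^ ((1 : ℝ) / ((d : ℝ) - 1)) ≤ (m : ℝ) := Nat.le_ceil _
  have hlogn : (0:ℝ) < Real.log n := Real.log_pos (by exact_mod_cast hn.trans_lt' one_lt_two)
  have hm0 : 0 < m := by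
    rw [hmdef]
    apply Nat.ceil_pos.mpr
    positivity
  haveI : NeZero m := ⟨hm0.ne'⟩
  set E := Finset (Fin (d+1) × Fin n) with hE
  set ι := {a : Fin (d+1) → Fin m // ∑ i, ((a i : ℕ) : ZMod m) = 0} with hι
  set S := {P : Fin (d+1) → Finset (Fin n) // ∀ i, (P i).card = m} with hS
  let w : S → Fin (d+1) → Fin m → Fin n := fun P i => (P.1 i).orderEmbOfFin (P.2 i)
  have hw : ∀ (P : S) i, Function.Injective (w P i) :=
    fun P i => (Finset.orderEmbOfFin (P.1 i) (P.2 i)).injective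
  suffices h : ∃ χ : E → Bool, ∀ (P : S) (b : Bool), ∃ a : ι, ∀ i, χ (cedge (w P) a.1 i) = b by
    obtain ⟨χ, hχ⟩ := h
    refine ⟨χ, fun P hP b => ?_⟩
    obtain ⟨a, ha⟩ := hχ ⟨P, hP⟩ b
    exact ⟨fun i => w ⟨P, hP⟩ i (a.1 i),
      fun i => Finset.orderEmbOfFin_mem (P i) (hP i) (a.1 i), fun i => ha i⟩
  by_contra hcon
  push_neg at hcon
  -- Bad sets
  let Bad : S × Bool → Finset (E → Bool) := fun q =>
    Finset.univ.filter fun χ => ∀ a : ι, ∃ i, χ (cedge (w q.1) a.1 i) ≠ q.2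
  have hsub : (Finset.univ : Finset (E → Bool)) ⊆ Finset.univ.biUnion Bad := by
    intro χ _
    rw [Finset.mem_biUnion]
    obtain ⟨P, b, hPb⟩ := hcon χ
    exact ⟨(P, b), Finset.mem_univ _, Finset.mem_filter.mpr ⟨Finset.mem_univ _, hPb⟩⟩
  set t := Fintype.card ι with ht
  have htm : m ^ d ≤ t := by
    rw [ht, ← Nat.card_eq_fintype_card]
    exact card_zerosum d m
  have hcard : ∀ q : S × Bool,
      (Bad q).card * 2 ^ ((d+1) * t) = (2 ^ (d+1) - 1) ^ t * 2 ^ (Fintype.card E) := by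
    intro q
    have hg : Function.Injective (fun ai : ι × Fin (d+1) => cedge (w q.1) ai.1.1 ai.2) := by
      rintro ⟨a, i⟩ ⟨a', i'⟩ hh
      obtain ⟨h1, h2⟩ := cedge_inj (w q.1) (hw q.1) a.2 a'.2 hh
      rw [Prod.mk.injEq]
      exact ⟨Subtype.ext h1, h2⟩
    have := avoid_count (d+1) _ hg q.2
    rw [Nat.card_eq_fintype_card, Fintype.card_subtype] at this
    rw [← this, ht]
  -- count S
  have hScard : Fintype.card S ≤ (n.choose m) ^ (d+1) := by
    have e1 : S ≃ ∀ _i : Fin (d+1), {s : Finset (Fin n) // s.card = m} :=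
      Equiv.subtypePiEquivPi (β := fun _ : Fin (d+1) => Finset (Fin n))
        (p := fun _ s => s.card = m)
    rw [Fintype.card_congr e1, Fintype.card_pi]
    have : ∀ _i : Fin (d+1), Fintype.card {s : Finset (Fin n) // s.card = m} = n.choose m := by
      intro _
      rw [Fintype.card_finset_len, Fintype.card_fin]
    refine le_of_eq ?_
    calc ∏ i : Fin (d+1), Fintype.card {s : Finset (Fin n) // s.card = m}
        = ∏ _i : Fin (d+1), n.choose m := Finset.prod_congr rfl (fun i _ => this i)
      _ = (n.choose m) ^ (d+1) := by rw [Finset.prod_const, Finset.card_univ, Fintype.card_fin]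
  have hkey := core_nat d n m t hd hn hm htm
  -- final contradiction
  have h1 : 2 ^ (Fintype.card E) ≤ ∑ q : S × Bool, (Bad q).card := by
    calc 2 ^ (Fintype.card E) = Fintype.card (E → Bool) := by
          rw [Fintype.card_fun, Fintype.card_bool]
      _ = (Finset.univ : Finset (E → Bool)).card := (Finset.card_univ).symm
      _ ≤ (Finset.univ.biUnion Bad).card := Finset.card_le_card hsub
      _ ≤ ∑ q : S × Bool, (Bad q).card := Finset.card_biUnion_le
  have h2 : 2 ^ (Fintype.card E) * 2 ^ ((d+1) * t)
      ≤ (2 * (n.choose m) ^ (d+1) * (2 ^ (d+1) - 1) ^ t) * 2 ^ (Fintype.card E) := by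
    calc 2 ^ (Fintype.card E) * 2 ^ ((d+1) * t)
        ≤ (∑ q : S × Bool, (Bad q).card) * 2 ^ ((d+1) * t) :=
          Nat.mul_le_mul_right _ h1
      _ = ∑ q : S × Bool, (Bad q).card * 2 ^ ((d+1) * t) := by rw [Finset.sum_mul]
      _ = ∑ _q : S × Bool, (2 ^ (d+1) - 1) ^ t * 2 ^ (Fintype.card E) :=
          Finset.sum_congr rfl (fun q _ => hcard q)
      _ = (Fintype.card S * 2) * ((2 ^ (d+1) - 1) ^ t * 2 ^ (Fintype.card E)) := by
          rw [Finset.sum_const, Finset.card_univ, Fintype.card_prod, Fintype.card_bool,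
            smul_eq_mul]
      _ ≤ ((n.choose m) ^ (d+1) * 2) * ((2 ^ (d+1) - 1) ^ t * 2 ^ (Fintype.card E)) := by
          gcongr
      _ = (2 * (n.choose m) ^ (d+1) * (2 ^ (d+1) - 1) ^ t) * 2 ^ (Fintype.card E) := by
          ring
  have h3 : (2 * (n.choose m) ^ (d+1) * (2 ^ (d+1) - 1) ^ t) * 2 ^ (Fintype.card E)
      < 2 ^ ((d+1) * t) * 2 ^ (Fintype.card E) := by
    exact mul_lt_mul_of_pos_right hkey (by positivity)
  have := h2.trans_lt h3
  rw [mul_comm (2 ^ ((d+1) * t))] at this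
  exact lt_irrefl _ this
end

section
/- Every (d+1)-partite (d+1)-uniform hypergraph with parts of size n and at least α·n^{d+1} edges (0 < α ≤ 1) contains a complete (d+1)-partite subhypergraph with all parts of size ⌊α (log n)^{1/d}⌋. -/
open Finset Function Real

namespace Stmt6Aux

/-- `2 log z ≤ z` for positive `z`. -/
lemma two_log_le {z : ℝ} (hz : 0 < z) : 2 * Real.log z ≤ z := by
  have h1 : Real.log (z / 2) ≤ z / 2 - 1 := Real.log_le_sub_one_of_pos (by linarith)
  have h2 : Real.log z = Real.log 2 + Real.log (z / 2) := by
    rw [← Real.log_mul (by norm_num) (by positivity)]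
    congr 1
    ring
  have h3 : Real.log 2 < 0.6931471808 := Real.log_two_lt_d9
  linarith

/-- `log 2 + 2 log t ≤ t` for `t ≥ 3`. -/
lemma log_two_add_two_log_le {t : ℝ} (ht : 3 ≤ t) : Real.log 2 + 2 * Real.log t ≤ t := by
  have h1 : Real.log (t / 3) ≤ t / 3 - 1 := Real.log_le_sub_one_of_pos (by linarith)
  have h2 : Real.log t = Real.log 3 + Real.log (t / 3) := by
    rw [← Real.log_mul (by norm_num) (by positivity)]
    congr 1
    ring
  have h18 : Real.log 2 + 2 * Real.log 3 < 3 := by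
    have h9 : Real.log 2 + 2 * Real.log 3 = Real.log 18 := by
      rw [show (18:ℝ) = 2 * 3 ^ (2:ℕ) by norm_num,
        Real.log_mul (by norm_num) (by positivity), Real.log_pow]
      push_cast
      ring
    rw [h9, Real.log_lt_iff_lt_exp (by norm_num)]
    have he : (2.7182818283:ℝ) < Real.exp 1 := Real.exp_one_gt_d9
    have h3 : Real.exp 3 = Real.exp 1 ^ (3:ℕ) := by
      rw [← Real.exp_nat_mul]
      norm_num
    have h4 : (2.7182818283:ℝ)^(3:ℕ) ≤ Real.exp 1 ^ (3:ℕ) :=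
      pow_le_pow_left₀ (by norm_num) he.le 3
    have h5 : (18:ℝ) < (2.7182818283:ℝ)^(3:ℕ) := by norm_num
    linarith
  linarith

/-- Counting edges fiber-wise over the first coordinate. -/
lemma card_eq_sum_fibers {n r : ℕ} (H : Finset (Fin (r+2) → Fin n)) :
    H.card = ∑ x : Fin (r+1) → Fin n,
      (univ.filter (fun a : Fin n => Fin.cons a x ∈ H)).card := by
  classical
  have h1 : H.card = ∑ f : Fin (r+2) → Fin n, if f ∈ H then 1 else 0 := by
    conv_lhs => rw [← Finset.filter_univ_mem H]
    rw [Finset.card_filter]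
  rw [h1, ← Equiv.sum_comp (Fin.consEquiv (fun _ => Fin n))
      (fun f => if f ∈ H then 1 else 0), Fintype.sum_prod_type]
  rw [Finset.sum_comm]
  refine Finset.sum_congr rfl fun x _ => ?_
  rw [Finset.card_filter]
  rfl

/-- `deg(x)^t` counts tuples all of whose extensions lie in `H`. -/
lemma card_pow_eq {n t r : ℕ} (H : Finset (Fin (r+2) → Fin n)) (x : Fin (r+1) → Fin n) :
    (univ.filter (fun a : Fin n => Fin.cons a x ∈ H)).card ^ t
      = (univ.filter (fun v : Fin t → Fin n => ∀ j, Fin.cons (v j) x ∈ H)).card := by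
  classical
  have h : (univ.filter (fun v : Fin t → Fin n => ∀ j, Fin.cons (v j) x ∈ H))
      = Fintype.piFinset (fun _ : Fin t =>
          univ.filter (fun a : Fin n => Fin.cons a x ∈ H)) := by
    ext v
    simp [Fintype.mem_piFinset]
  rw [h, Fintype.card_piFinset]
  simp

lemma swap_sum {n t r : ℕ} (H : Finset (Fin (r+2) → Fin n)) :
    ∑ v : Fin t → Fin n,
        (univ.filter (fun x : Fin (r+1) → Fin n => ∀ j, Fin.cons (v j) x ∈ H)).card
      = ∑ x : Fin (r+1) → Fin n,
        (univ.filter (fun v : Fin t → Fin n => ∀ j, Fin.cons (v j) x ∈ H)).card := by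
  classical
  simp only [Finset.card_filter]
  exact Finset.sum_comm

lemma pair_card_le {n t : ℕ} (j k : Fin t) (hjk : j ≠ k) :
    (univ.filter (fun v : Fin t → Fin n => v j = v k)).card ≤ n ^ (t-1) := by
  classical
  have hcard : Fintype.card ({i : Fin t // ¬ (i = k)} → Fin n) = n ^ (t-1) := by
    rw [Fintype.card_fun, Fintype.card_fin]
    congr 1
    rw [Fintype.card_subtype_compl, Fintype.card_subtype_eq, Fintype.card_fin]
  have hinj : Set.InjOn (fun (v : Fin t → Fin n) (s : {i : Fin t // ¬ (i = k)}) => v s.1)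
      (univ.filter (fun v : Fin t → Fin n => v j = v k)) := by
    intro v hv w hw h
    simp only [coe_filter, Set.mem_setOf_eq, mem_univ, true_and] at hv hw
    funext i
    by_cases hi : i = k
    · subst hi
      have h1 : v j = w j := congrFun h ⟨j, hjk⟩
      rw [← hv, ← hw, h1]
    · exact congrFun h ⟨i, hi⟩
  calc (univ.filter (fun v : Fin t → Fin n => v j = v k)).card
      ≤ (univ : Finset ({i : Fin t // ¬ (i = k)} → Fin n)).card :=
        Finset.card_le_card_of_injOn _ (fun _ _ => mem_univ _) hinj
    _ = n ^ (t-1) := by rw [Finset.card_univ, hcard]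

lemma noninj_card_le {n t : ℕ} :
    (univ.filter (fun v : Fin t → Fin n => ¬ Function.Injective v)).card
      ≤ t * (t-1) * n ^ (t-1) := by
  classical
  have hsub : univ.filter (fun v : Fin t → Fin n => ¬ Function.Injective v)
      ⊆ (univ : Finset (Fin t)).offDiag.biUnion
          (fun p => univ.filter (fun v : Fin t → Fin n => v p.1 = v p.2)) := by
    intro v hv
    replace hv : ¬ Function.Injective v := (Finset.mem_filter.1 hv).2
    unfold Function.Injective at hv
    push_neg at hv
    obtain ⟨a, b, hab, hne⟩ := hv
    refine Finset.mem_biUnion.2 ⟨(a, b), ?_, ?_⟩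
    · simp [Finset.mem_offDiag, hne]
    · simp [hab]
  calc (univ.filter (fun v : Fin t → Fin n => ¬ Function.Injective v)).card
      ≤ ((univ : Finset (Fin t)).offDiag.biUnion
          (fun p => univ.filter (fun v : Fin t → Fin n => v p.1 = v p.2))).card :=
        Finset.card_le_card hsub
    _ ≤ ∑ p ∈ (univ : Finset (Fin t)).offDiag,
          (univ.filter (fun v : Fin t → Fin n => v p.1 = v p.2)).card :=
        Finset.card_biUnion_le
    _ ≤ ∑ _p ∈ (univ : Finset (Fin t)).offDiag, n ^ (t-1) := by
        refine Finset.sum_le_sum fun p hp => ?_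
        exact pair_card_le p.1 p.2 (Finset.mem_offDiag.1 hp).2.2
    _ = t * (t-1) * n ^ (t-1) := by
        rw [Finset.sum_const, smul_eq_mul, Finset.offDiag_card, Finset.card_univ,
          Fintype.card_fin]
        congr 1
        cases t with
        | zero => rfl
        | succ m => rw [Nat.succ_sub_one, Nat.mul_succ, Nat.add_sub_cancel]

/-- The key recursive lemma: from a density invariant, extract a complete
multipartite subhypergraph with all parts of size `t`. -/
lemma key (n t : ℕ) : ∀ (r : ℕ) (β : ℝ) (H : Finset (Fin (r+1) → Fin n)),
    0 < β → β ≤ 1 → β * (n:ℝ)^(r+1) ≤ H.card →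
    (2:ℝ)^(∑ i ∈ Finset.range r, t^i) * max (t:ℝ) ((t:ℝ)*((t:ℝ)-1)) ≤ β^(t^r) * n →
    ∃ P : Fin (r+1) → Finset (Fin n),
      (∀ i, (P i).card = t) ∧ ∀ v : Fin (r+1) → Fin n, (∀ i, v i ∈ P i) → v ∈ H := by
  classical
  rcases Nat.eq_zero_or_pos t with rfl | htpos
  · intro r β H _ _ _ _
    exact ⟨fun _ => ∅, fun _ => rfl, fun v hv => absurd (hv 0) (Finset.notMem_empty _)⟩
  obtain ⟨t', rfl⟩ : ∃ t', t = t'+1 := ⟨t-1, by omega⟩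
  intro r
  induction r with
  | zero =>
    intro β H hβ hβ1 hcard hinv
    simp only [Finset.range_zero, Finset.sum_empty, pow_zero, pow_one, one_mul, zero_add] at hinv hcard
    have h1 : ((t'+1:ℕ):ℝ) ≤ (H.card : ℝ) := by
      calc ((t'+1:ℕ):ℝ)
          ≤ max ((t'+1:ℕ):ℝ) (((t'+1:ℕ):ℝ)*(((t'+1:ℕ):ℝ)-1)) := le_max_left _ _
        _ ≤ β * n := hinv
        _ ≤ H.card := hcard
    have ht' : t'+1 ≤ H.card := by exact_mod_cast h1
    obtain ⟨S, hSsub, hScard⟩ := Finset.exists_subset_card_eq ht'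
    have hinj0 : Function.Injective (fun f : Fin 1 → Fin n => f 0) := by
      intro f g hfg
      funext i
      rw [Fin.eq_zero i]
      exact hfg
    refine ⟨fun _ => S.image (fun f => f 0), ?_, ?_⟩
    · intro _
      rw [Finset.card_image_of_injective _ hinj0, hScard]
    · intro v hv
      obtain ⟨f, hfS, hf0⟩ := Finset.mem_image.1 (hv 0)
      have hvf : v = f := by
        funext i
        rw [Fin.eq_zero i, hf0]
      rw [hvf]
      exact hSsub hfS
  | succ r ih =>
    intro β H hβ hβ1 hcard hinv
    set T : ℕ := (t'+1)^r with hT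
    have hn : 0 < n := by
      rcases Nat.eq_zero_or_pos n with rfl | h
      · exfalso
        have h1 : (0:ℝ) < (2:ℝ)^(∑ i ∈ Finset.range (r+1), (t'+1)^i)
            * max ((t'+1:ℕ):ℝ) (((t'+1:ℕ):ℝ)*(((t'+1:ℕ):ℝ)-1)) := by
          apply mul_pos (by positivity)
          have h2 : (0:ℝ) < ((t'+1:ℕ):ℝ) := by exact_mod_cast Nat.succ_pos t'
          exact lt_of_lt_of_le h2 (le_max_left _ _)
        rw [Nat.cast_zero, mul_zero] at hinv
        linarith
      · exact h
    have hn' : (0:ℝ) < (n:ℝ) := by exact_mod_cast hn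
    set D : (Fin (r+1) → Fin n) → ℕ :=
      fun x => (univ.filter (fun a : Fin n => Fin.cons a x ∈ H)).card with hD
    set F : (Fin (t'+1) → Fin n) → Finset (Fin (r+1) → Fin n) :=
      fun v => univ.filter (fun x => ∀ j, Fin.cons (v j) x ∈ H) with hF
    have hsum : H.card = ∑ x : Fin (r+1) → Fin n, D x := card_eq_sum_fibers H
    have hcard' : β * (n:ℝ)^(r+2) ≤ ∑ x : Fin (r+1) → Fin n, (D x : ℝ) := by
      calc β * (n:ℝ)^(r+2) ≤ (H.card : ℝ) := hcard
        _ = ∑ x : Fin (r+1) → Fin n, (D x : ℝ) := by rw [hsum]; push_cast; rfl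
    have hjen0 := pow_sum_le_card_mul_sum_pow
      (s := (univ : Finset (Fin (r+1) → Fin n))) (f := fun x => (D x : ℝ))
      (fun i _ => by positivity) t'
    have hcu : (((univ : Finset (Fin (r+1) → Fin n)).card : ℕ) : ℝ) = (n:ℝ)^(r+1) := by
      rw [Finset.card_univ, Fintype.card_fun, Fintype.card_fin, Fintype.card_fin]
      push_cast
      ring
    have h2 : (β * (n:ℝ)^(r+2))^(t'+1)
        ≤ (n:ℝ)^((r+1)*t') * ∑ x : Fin (r+1) → Fin n, (D x : ℝ)^(t'+1) := by
      calc (β * (n:ℝ)^(r+2))^(t'+1)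
          ≤ (∑ x : Fin (r+1) → Fin n, (D x : ℝ))^(t'+1) :=
            pow_le_pow_left₀ (by positivity) hcard' _
        _ ≤ ((((univ : Finset (Fin (r+1) → Fin n)).card : ℕ)) : ℝ)^t'
            * ∑ x : Fin (r+1) → Fin n, (D x : ℝ)^(t'+1) := hjen0
        _ = (n:ℝ)^((r+1)*t') * ∑ x : Fin (r+1) → Fin n, (D x : ℝ)^(t'+1) := by
            rw [hcu, ← pow_mul]
    have hid : (β * (n:ℝ)^(r+2))^(t'+1)
        = (β^(t'+1) * (n:ℝ)^(t'+r+2)) * (n:ℝ)^((r+1)*t') := by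
      rw [mul_pow, ← pow_mul, mul_assoc, ← pow_add]
      congr 2
      ring
    have hjen : β^(t'+1) * (n:ℝ)^(t'+r+2)
        ≤ ∑ x : Fin (r+1) → Fin n, (D x : ℝ)^(t'+1) := by
      rw [hid] at h2
      have hp : (0:ℝ) < (n:ℝ)^((r+1)*t') := by positivity
      rw [mul_comm ((n:ℝ)^((r+1)*t'))] at h2
      exact le_of_mul_le_mul_right h2 hp
    have hswap : ∑ v : Fin (t'+1) → Fin n, ((F v).card : ℝ)
        = ∑ x : Fin (r+1) → Fin n, (D x : ℝ)^(t'+1) := by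
      have h1 : ∑ v : Fin (t'+1) → Fin n, (F v).card
          = ∑ x : Fin (r+1) → Fin n, (D x)^(t'+1) := by
        rw [show (∑ v : Fin (t'+1) → Fin n, (F v).card)
            = ∑ v : Fin (t'+1) → Fin n, (univ.filter
              (fun x : Fin (r+1) → Fin n => ∀ j, Fin.cons (v j) x ∈ H)).card from rfl]
        rw [swap_sum H]
        exact Finset.sum_congr rfl fun x _ => (card_pow_eq H x).symm
      calc ∑ v : Fin (t'+1) → Fin n, ((F v).card : ℝ)
          = ((∑ v : Fin (t'+1) → Fin n, (F v).card : ℕ) : ℝ) := by push_cast; rfl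
        _ = ((∑ x : Fin (r+1) → Fin n, (D x)^(t'+1) : ℕ) : ℝ) := by rw [h1]
        _ = ∑ x : Fin (r+1) → Fin n, (D x : ℝ)^(t'+1) := by push_cast; rfl
    set I := univ.filter (fun v : Fin (t'+1) → Fin n => Function.Injective v) with hI
    have hFle : ∀ v : Fin (t'+1) → Fin n, ((F v).card : ℝ) ≤ (n:ℝ)^(r+1) := by
      intro v
      calc ((F v).card : ℝ) ≤ (((univ : Finset (Fin (r+1) → Fin n)).card : ℕ) : ℝ) := by
            exact_mod_cast Finset.card_le_card (Finset.filter_subset _ _)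
        _ = (n:ℝ)^(r+1) := hcu
    have hbadcard : ((univ.filter (fun v : Fin (t'+1) → Fin n =>
        ¬ Function.Injective v)).card : ℝ) ≤ ((t'+1:ℕ):ℝ) * (t' : ℝ) * (n:ℝ)^t' := by
      have h1 : ((univ.filter (fun v : Fin (t'+1) → Fin n =>
          ¬ Function.Injective v)).card : ℝ)
          ≤ (((t'+1) * (t'+1-1) * n ^ (t'+1-1) : ℕ) : ℝ) := by
        exact_mod_cast noninj_card_le (n := n) (t := t'+1)
      calc ((univ.filter (fun v : Fin (t'+1) → Fin n =>
            ¬ Function.Injective v)).card : ℝ)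
          ≤ (((t'+1) * (t'+1-1) * n ^ (t'+1-1) : ℕ) : ℝ) := h1
        _ = ((t'+1:ℕ):ℝ) * (t' : ℝ) * (n:ℝ)^t' := by
            simp only [Nat.add_sub_cancel]
            push_cast
            ring
    have hbadsum : ∑ v ∈ univ.filter (fun v : Fin (t'+1) → Fin n =>
        ¬ Function.Injective v), ((F v).card : ℝ)
        ≤ ((t'+1:ℕ):ℝ) * (t' : ℝ) * (n:ℝ)^t' * (n:ℝ)^(r+1) := by
      calc ∑ v ∈ univ.filter (fun v : Fin (t'+1) → Fin n =>
            ¬ Function.Injective v), ((F v).card : ℝ)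
          ≤ ∑ _v ∈ univ.filter (fun v : Fin (t'+1) → Fin n =>
            ¬ Function.Injective v), (n:ℝ)^(r+1) :=
            Finset.sum_le_sum fun v _ => hFle v
        _ = ((univ.filter (fun v : Fin (t'+1) → Fin n =>
            ¬ Function.Injective v)).card : ℝ) * (n:ℝ)^(r+1) := by
            rw [Finset.sum_const, nsmul_eq_mul]
        _ ≤ ((t'+1:ℕ):ℝ) * (t' : ℝ) * (n:ℝ)^t' * (n:ℝ)^(r+1) :=
            mul_le_mul_of_nonneg_right hbadcard (by positivity)
    have hsplit : ∑ v ∈ I, ((F v).card : ℝ)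
        + ∑ v ∈ univ.filter (fun v : Fin (t'+1) → Fin n =>
            ¬ Function.Injective v), ((F v).card : ℝ)
        = ∑ v : Fin (t'+1) → Fin n, ((F v).card : ℝ) :=
      Finset.sum_filter_add_sum_filter_not univ _ _
    set γ : ℝ := β^(t'+1) with hγ
    set c : ℝ := ((t'+1:ℕ):ℝ) * (t' : ℝ) with hc
    set β' : ℝ := γ - c / n with hβ'
    have hγ0 : 0 < γ := pow_pos hβ _
    have hγ1 : γ ≤ 1 := pow_le_one₀ hβ.le hβ1
    have hpowid : β^((t'+1)^(r+1)) = γ^T := by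
      rw [hγ, ← pow_mul, hT]
      congr 1
      rw [pow_succ]
      ring
    have hmono : γ^T ≤ γ := pow_le_of_le_one hγ0.le hγ1 (by positivity)
    set M : ℝ := max ((t'+1:ℕ):ℝ) (((t'+1:ℕ):ℝ)*(((t'+1:ℕ):ℝ)-1)) with hM
    have hMc : c ≤ M := by
      have h1 : ((t'+1:ℕ):ℝ)*(((t'+1:ℕ):ℝ)-1) = c := by rw [hc]; push_cast; ring
      rw [← h1]
      exact le_max_right _ _
    have hM0 : (0:ℝ) ≤ M := le_trans (by positivity) (le_max_left ((t'+1:ℕ):ℝ) _)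
    have hE : (∑ i ∈ Finset.range (r+1), (t'+1)^i)
        = (∑ i ∈ Finset.range r, (t'+1)^i) + T := by
      rw [Finset.sum_range_succ, hT]
    have hinv' : (2:ℝ)^(∑ i ∈ Finset.range r, (t'+1)^i) * (2:ℝ)^T * M ≤ γ^T * n := by
      calc (2:ℝ)^(∑ i ∈ Finset.range r, (t'+1)^i) * (2:ℝ)^T * M
          = (2:ℝ)^(∑ i ∈ Finset.range (r+1), (t'+1)^i) * M := by rw [hE, pow_add]
        _ ≤ β^((t'+1)^(r+1)) * n := hinv
        _ = γ^T * n := by rw [hpowid]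
    have h2M : 2 * M ≤ γ * n := by
      have hge : 1 ≤ ∑ i ∈ Finset.range (r+1), (t'+1)^i := by
        calc 1 = (t'+1)^0 := by ring
          _ ≤ ∑ i ∈ Finset.range (r+1), (t'+1)^i :=
            Finset.single_le_sum (f := fun i => (t'+1)^i) (fun _ _ => Nat.zero_le _)
              (Finset.mem_range.2 (Nat.succ_pos r))
      have h1 : (2:ℝ) ≤ (2:ℝ)^(∑ i ∈ Finset.range (r+1), (t'+1)^i) := by
        calc (2:ℝ) = 2^1 := (pow_one 2).symm
          _ ≤ (2:ℝ)^(∑ i ∈ Finset.range (r+1), (t'+1)^i) :=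
            pow_le_pow_right₀ (by norm_num) hge
      calc 2 * M ≤ (2:ℝ)^(∑ i ∈ Finset.range (r+1), (t'+1)^i) * M :=
            mul_le_mul_of_nonneg_right h1 hM0
        _ ≤ β^((t'+1)^(r+1)) * n := hinv
        _ = γ^T * n := by rw [hpowid]
        _ ≤ γ * n := mul_le_mul_of_nonneg_right hmono hn'.le
    have hcγ : c / n ≤ γ / 2 := by
      rw [div_le_div_iff₀ hn' (by norm_num)]
      nlinarith
    have hβ'γ : γ / 2 ≤ β' := by
      rw [hβ']
      linarith
    have hβ'0 : 0 < β' := lt_of_lt_of_le (by positivity) hβ'γ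
    have hβ'1 : β' ≤ 1 := by
      have h1 : (0:ℝ) ≤ c / n := by positivity
      rw [hβ']
      linarith
    have hnpow : (n:ℝ)^(t'+r+2) = (n:ℝ) * ((n:ℝ)^t' * (n:ℝ)^(r+1)) := by
      rw [show t'+r+2 = 1+(t'+(r+1)) by ring, pow_add, pow_one, pow_add]
    have hgood : β' * (n:ℝ)^(t'+r+2) ≤ ∑ v ∈ I, ((F v).card : ℝ) := by
      have h1 : β' * (n:ℝ)^(t'+r+2)
          = γ * (n:ℝ)^(t'+r+2) - c * ((n:ℝ)^t' * (n:ℝ)^(r+1)) := by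
        rw [hβ', sub_mul, hnpow]
        congr 1
        field_simp
      rw [h1]
      have h3 : γ * (n:ℝ)^(t'+r+2) ≤ ∑ v : Fin (t'+1) → Fin n, ((F v).card : ℝ) := by
        rw [hswap, hγ]
        exact hjen
      have hcm : c * ((n:ℝ)^t' * (n:ℝ)^(r+1))
          = ((t'+1:ℕ):ℝ) * (t' : ℝ) * (n:ℝ)^t' * (n:ℝ)^(r+1) := by rw [hc]; ring
      rw [hcm]
      linarith [hbadsum, hsplit]
    have hex : ∃ v ∈ I, β' * (n:ℝ)^(r+1) ≤ ((F v).card : ℝ) := by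
      by_contra hcon
      push_neg at hcon
      have hpos : (0:ℝ) < β' * (n:ℝ)^(t'+r+2) := by positivity
      have hIne : I.Nonempty := by
        rw [Finset.nonempty_iff_ne_empty]
        intro hemp
        rw [hemp, Finset.sum_empty] at hgood
        linarith
      have hlt : ∑ v ∈ I, ((F v).card : ℝ) < ∑ _v ∈ I, β' * (n:ℝ)^(r+1) :=
        Finset.sum_lt_sum_of_nonempty hIne (fun v hv => hcon v hv)
      rw [Finset.sum_const, nsmul_eq_mul] at hlt
      have hIcard : (I.card : ℝ) ≤ (n:ℝ)^(t'+1) := by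
        calc (I.card : ℝ) ≤ (((univ : Finset (Fin (t'+1) → Fin n)).card : ℕ) : ℝ) := by
              exact_mod_cast Finset.card_le_card (Finset.filter_subset _ _)
          _ = (n:ℝ)^(t'+1) := by
              rw [Finset.card_univ, Fintype.card_fun, Fintype.card_fin, Fintype.card_fin]
              push_cast
              ring
      have hfin : β' * (n:ℝ)^(t'+r+2) = (n:ℝ)^(t'+1) * (β' * (n:ℝ)^(r+1)) := by
        rw [show t'+r+2 = (t'+1)+(r+1) by ring, pow_add]
        ring
      have hmul : (I.card : ℝ) * (β' * (n:ℝ)^(r+1)) ≤ (n:ℝ)^(t'+1) * (β' * (n:ℝ)^(r+1)) :=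
        mul_le_mul_of_nonneg_right hIcard (by positivity)
      linarith [hgood, hlt, hmul]
    obtain ⟨v, hvI, hvB⟩ := hex
    have hvinj : Function.Injective v := (Finset.mem_filter.1 hvI).2
    have hstep : (2:ℝ)^(∑ i ∈ Finset.range r, (t'+1)^i) * M ≤ β'^((t'+1)^r) * n := by
      have h1 : (γ/2)^T ≤ β'^T := pow_le_pow_left₀ (by positivity) hβ'γ _
      have h2T : (0:ℝ) < 2^T := by positivity
      have h3 : (2:ℝ)^(∑ i ∈ Finset.range r, (t'+1)^i) * M * (2:ℝ)^T ≤ γ^T * n := by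
        calc (2:ℝ)^(∑ i ∈ Finset.range r, (t'+1)^i) * M * (2:ℝ)^T
            = (2:ℝ)^(∑ i ∈ Finset.range r, (t'+1)^i) * (2:ℝ)^T * M := by ring
          _ ≤ γ^T * n := hinv'
      have h4 : (2:ℝ)^(∑ i ∈ Finset.range r, (t'+1)^i) * M ≤ (γ/2)^T * n := by
        rw [← le_div_iff₀ h2T] at h3
        calc (2:ℝ)^(∑ i ∈ Finset.range r, (t'+1)^i) * M ≤ γ^T * n / 2^T := h3
          _ = γ^T / 2^T * n := by ring
          _ = (γ/2)^T * n := by rw [div_pow]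
      calc (2:ℝ)^(∑ i ∈ Finset.range r, (t'+1)^i) * M ≤ (γ/2)^T * n := h4
        _ ≤ β'^T * n := mul_le_mul_of_nonneg_right h1 hn'.le
        _ = β'^((t'+1)^r) * n := by rw [hT]
    obtain ⟨P, hPcard, hPmem⟩ := ih β' (F v) hβ'0 hβ'1 hvB hstep
    refine ⟨Fin.cons (univ.image v) P, ?_, ?_⟩
    · intro i
      refine Fin.cases ?_ ?_ i
      · rw [Fin.cons_zero, Finset.card_image_of_injective _ hvinj, Finset.card_univ,
          Fintype.card_fin]
      · intro j
        rw [Fin.cons_succ]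
        exact hPcard j
    · intro w hw
      have h0 := hw 0
      rw [Fin.cons_zero] at h0
      obtain ⟨j, _, hj⟩ := Finset.mem_image.1 h0
      have htail : Fin.tail w ∈ F v := by
        apply hPmem
        intro i
        have h5 := hw i.succ
        rwa [Fin.cons_succ] at h5
      have hmem := (Finset.mem_filter.1 htail).2 j
      rw [hj] at hmem
      rwa [Fin.cons_self_tail] at hmem

end Stmt6Aux

namespace Stmt6Aux

set_option maxHeartbeats 1000000 in
lemma main_aux (d n : ℕ) (hd : 1 ≤ d) (α : ℝ) (hα : 0 < α) (hα1 : α ≤ 1)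
    (H : Finset (Fin (d+1) → Fin n)) (hH : α * (n : ℝ) ^ (d+1) ≤ H.card)
    (t : ℕ) (ht : (t:ℝ) ≤ α * Real.log n ^ ((1 : ℝ) / d)) :
    ∃ P : Fin (d+1) → Finset (Fin n),
      (∀ i, (P i).card = t) ∧
      ∀ v : Fin (d+1) → Fin n, (∀ i, v i ∈ P i) → v ∈ H := by
  classical
  obtain ⟨d', rfl⟩ : ∃ d', d = d'+1 := ⟨d-1, by omega⟩
  set x : ℝ := Real.log n with hxdef
  set y : ℝ := x ^ ((1:ℝ)/((d'+1:ℕ):ℝ)) with hydef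
  have hx0 : 0 ≤ x := by
    rw [hxdef]
    rcases Nat.eq_zero_or_pos n with rfl | h
    · simp
    · exact Real.log_nonneg (by exact_mod_cast h)
  have hy0 : 0 ≤ y := Real.rpow_nonneg hx0 _
  rcases Nat.lt_or_ge t 2 with ht2 | ht2
  · have ht01 : t = 0 ∨ t = 1 := by omega
    rcases ht01 with rfl | rfl
    · exact ⟨fun _ => ∅, fun _ => rfl, fun v hv => absurd (hv 0) (Finset.notMem_empty _)⟩
    · -- t = 1 : single edge suffices
      have hn : 0 < n := by
        by_contra h
        push_neg at h
        have hn0 : n = 0 := by omega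
        subst hn0
        have hy' : y = 0 := by
          rw [hydef, hxdef]
          norm_num
          exact Real.zero_rpow (by positivity)
        rw [hy'] at ht
        norm_num at ht
      have hpos : (0:ℝ) < α * (n:ℝ)^(d'+1+1) := by positivity
      have hne : H.Nonempty := by
        rw [← Finset.card_pos]
        by_contra h
        push_neg at h
        have h0 : H.card = 0 := by omega
        rw [h0] at hH
        norm_num at hH
        linarith
      obtain ⟨e, he⟩ := hne
      refine ⟨fun i => {e i}, fun i => Finset.card_singleton _, fun v hv => ?_⟩
      have hve : v = e := funext fun i => Finset.mem_singleton.1 (hv i)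
      rwa [hve]
  · -- main case t ≥ 2
    have ht2' : (2:ℝ) ≤ (t:ℝ) := by exact_mod_cast ht2
    have ht0 : (0:ℝ) < (t:ℝ) := by linarith
    have hty : (t:ℝ) ≤ α * y := ht
    have htyy : (t:ℝ) ≤ y := le_trans hty (by nlinarith)
    have hy2 : (2:ℝ) ≤ y := le_trans ht2' htyy
    have hypos : (0:ℝ) < y := by linarith
    have hxpos : 0 < x := by
      by_contra h
      push_neg at h
      have hx00 : x = 0 := le_antisymm h hx0
      rw [hydef, hx00, Real.zero_rpow (by positivity : (1:ℝ)/((d'+1:ℕ):ℝ) ≠ 0)] at hy2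
      linarith
    have hn2 : 2 ≤ n := by
      by_contra h
      push_neg at h
      have : n = 0 ∨ n = 1 := by omega
      rcases this with rfl | rfl
      · rw [hxdef] at hxpos; norm_num at hxpos
      · rw [hxdef] at hxpos; norm_num at hxpos
    have hn' : (0:ℝ) < (n:ℝ) := by positivity
    have hyx : y ^ (d'+1) = x := by
      rw [hydef, ← Real.rpow_natCast (x ^ ((1:ℝ)/((d'+1:ℕ):ℝ))) (d'+1),
        ← Real.rpow_mul hx0]
      rw [show (1:ℝ)/((d'+1:ℕ):ℝ) * ((d'+1:ℕ):ℝ) = 1 by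
        field_simp]
      exact Real.rpow_one x
    have hs0 : Real.log (t:ℝ) ≤ Real.log y := Real.log_le_log ht0 htyy
    have hlogα : -Real.log α ≤ Real.log y - Real.log (t:ℝ) := by
      have h1 : (t:ℝ)/y ≤ α := by
        rw [div_le_iff₀ hypos]
        nlinarith
      have h2 : Real.log ((t:ℝ)/y) ≤ Real.log α := Real.log_le_log (by positivity) h1
      rw [Real.log_div (by positivity) (by positivity)] at h2
      linarith
    have htt1 : (0:ℝ) < (t:ℝ) * ((t:ℝ)-1) := by nlinarith
    have hE2 : ((∑ i ∈ Finset.range (d'+1), t^i : ℕ) : ℝ)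
        = ∑ i ∈ Finset.range (d'+1), (t:ℝ)^i := by push_cast; rfl
    -- the core analytic inequality
    have hcore : ((∑ i ∈ Finset.range (d'+1), t^i : ℕ) : ℝ) * Real.log 2
        + Real.log ((t:ℝ) * ((t:ℝ)-1))
        + ((t:ℝ)^(d'+1)) * (Real.log y - Real.log (t:ℝ))
        ≤ y ^ (d'+1) := by
      rcases eq_or_lt_of_le ht2 with ht2e | ht3
      · -- t = 2
        have ht2n : t = 2 := ht2e.symm
        subst ht2n
        have hEg : ((∑ i ∈ Finset.range (d'+1), 2^i : ℕ) : ℝ) = 2^(d'+1) - 1 := by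
          rw [hE2]
          push_cast
          rw [geom_sum_eq (by norm_num : (2:ℝ) ≠ 1)]
          norm_num
        have h2ly : 2 * Real.log y ≤ y := two_log_le hypos
        have hp : (2:ℝ)^d' ≤ y^d' := pow_le_pow_left₀ (by norm_num) hy2 d'
        have hlm : Real.log (((2:ℕ):ℝ) * (((2:ℕ):ℝ)-1)) = Real.log 2 := by
          norm_num
        rw [hEg, hlm]
        push_cast
        have hps2 : (2:ℝ)^(d'+1) = 2 * 2^d' := by rw [pow_succ]; ring
        have hpsy : y^(d'+1) = y^d' * y := by rw [pow_succ]
        have hk1 : (2:ℝ)^d' * (2 * Real.log y) ≤ 2^d' * y :=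
          mul_le_mul_of_nonneg_left h2ly (by positivity)
        have hk2 : (2:ℝ)^d' * y ≤ y^d' * y :=
          mul_le_mul_of_nonneg_right hp (by positivity)
        rw [hps2, hpsy]
        nlinarith [hk1, hk2]
      · -- t ≥ 3
        have ht3' : (3:ℝ) ≤ (t:ℝ) := by exact_mod_cast ht3
        have hlogm : Real.log ((t:ℝ)*((t:ℝ)-1)) ≤ 2 * Real.log (t:ℝ) := by
          have h1 : (t:ℝ)*((t:ℝ)-1) ≤ (t:ℝ)^(2:ℕ) := by nlinarith
          have h2 := Real.log_le_log htt1 h1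
          rw [Real.log_pow] at h2
          push_cast at h2
          linarith
        rcases Nat.eq_zero_or_pos d' with rfl | hd1
        · -- d = 1
          have hE1 : ((∑ i ∈ Finset.range 1, t^i : ℕ) : ℝ) = 1 := by
            simp
          rw [hE1]
          have hq2 : Real.log (y/(t:ℝ)) ≤ y/(t:ℝ) - 1 :=
            Real.log_le_sub_one_of_pos (by positivity)
          have hq3 : Real.log (y/(t:ℝ)) = Real.log y - Real.log (t:ℝ) :=
            Real.log_div (by positivity) (by positivity)
          have hq5 : (t:ℝ)*(Real.log y - Real.log (t:ℝ)) ≤ (t:ℝ)*(y/(t:ℝ) - 1) :=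
            mul_le_mul_of_nonneg_left (by linarith) ht0.le
          have hq6 : (t:ℝ)*(y/(t:ℝ) - 1) = y - t := by field_simp
          have key2 : Real.log 2 + 2 * Real.log (t:ℝ) ≤ (t:ℝ) :=
            log_two_add_two_log_le ht3'
          have hpw : ((t:ℝ))^(0+1) = (t:ℝ) := by norm_num
          have hpwy : y^(0+1) = y := by norm_num
          rw [hpw, hpwy]
          linarith
        · -- d ≥ 2
          obtain ⟨d'', rfl⟩ : ∃ d'', d' = d''+1 := ⟨d'-1, by omega⟩
          have htpos : (0:ℝ) < (t:ℝ)^(d''+1+1) := by positivity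
          -- geometric sum bound : 2 E ≤ t^(d+1)
          have hEle : ((∑ i ∈ Finset.range (d''+1+1), t^i : ℕ) : ℝ) * 2
              ≤ (t:ℝ)^(d''+1+1) := by
            have hg := geom_sum_mul (t:ℝ) (d''+1+1)
            have hEnn : (0:ℝ) ≤ ((∑ i ∈ Finset.range (d''+1+1), t^i : ℕ) : ℝ) := by
              positivity
            have h21 : (2:ℝ) ≤ (t:ℝ) - 1 := by linarith
            rw [hE2] at hEnn ⊢
            nlinarith [hg]
          -- convexity bound : t^(d+1) (1 + (d+1) s) ≤ y^(d+1)
          have hz : (0:ℝ) < y/(t:ℝ) := by positivity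
          have hexp1 : ((d''+1+1:ℕ):ℝ)*Real.log (y/(t:ℝ)) + 1
              ≤ Real.exp (((d''+1+1:ℕ):ℝ)*Real.log (y/(t:ℝ))) := Real.add_one_le_exp _
          have hexp2 : Real.exp (((d''+1+1:ℕ):ℝ)*Real.log (y/(t:ℝ)))
              = (y/(t:ℝ))^(d''+1+1) := by
            rw [← Real.log_pow, Real.exp_log (pow_pos hz _)]
          have hq3 : Real.log (y/(t:ℝ)) = Real.log y - Real.log (t:ℝ) :=
            Real.log_div (by positivity) (by positivity)
          have hconv : (t:ℝ)^(d''+1+1) * (1 + ((d''+1+1:ℕ):ℝ)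
              * (Real.log y - Real.log (t:ℝ))) ≤ y^(d''+1+1) := by
            have h1 : 1 + ((d''+1+1:ℕ):ℝ) * (Real.log y - Real.log (t:ℝ))
                ≤ (y/(t:ℝ))^(d''+1+1) := by
              rw [← hexp2, ← hq3]
              linarith
            have h2 : (t:ℝ)^(d''+1+1) * (y/(t:ℝ))^(d''+1+1) = y^(d''+1+1) := by
              rw [div_pow]
              field_simp
            calc (t:ℝ)^(d''+1+1) * (1 + ((d''+1+1:ℕ):ℝ)
                  * (Real.log y - Real.log (t:ℝ)))
                ≤ (t:ℝ)^(d''+1+1) * (y/(t:ℝ))^(d''+1+1) :=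
                  mul_le_mul_of_nonneg_left h1 htpos.le
              _ = y^(d''+1+1) := h2
          -- main bound : E log 2 + 2 log t ≤ t^(d+1)
          have h2lt : 2 * Real.log (t:ℝ) ≤ (t:ℝ) := two_log_le ht0
          have htpow : (t:ℝ) * 3 ≤ (t:ℝ)^(d''+1+1) := by
            have h1 : (t:ℝ) ≤ (t:ℝ)^(d''+1) := le_self_pow₀ (by linarith) (by omega)
            calc (t:ℝ) * 3 ≤ (t:ℝ)^(d''+1) * (t:ℝ) := by nlinarith
              _ = (t:ℝ)^(d''+1+1) := by rw [← pow_succ]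
          have hl2 : Real.log 2 < 0.6931471808 := Real.log_two_lt_d9
          have hl2' : (0:ℝ) ≤ Real.log 2 := Real.log_nonneg (by norm_num)
          have hmain : ((∑ i ∈ Finset.range (d''+1+1), t^i : ℕ) : ℝ) * Real.log 2
              + 2 * Real.log (t:ℝ) ≤ (t:ℝ)^(d''+1+1) := by
            nlinarith [hEle, h2lt, htpow, hl2, hl2',
              mul_le_mul_of_nonneg_right hEle hl2']
          have hsge : (0:ℝ) ≤ Real.log y - Real.log (t:ℝ) := by linarith
          have hd1' : (1:ℝ) ≤ ((d''+1+1:ℕ):ℝ) := by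
            push_cast
            linarith
          nlinarith [hconv, hmain, hlogm, hsge, htpos,
            mul_le_mul_of_nonneg_left hd1' (mul_nonneg htpos.le hsge)]
    -- build the invariant and apply `key`
    have hMeq : max (t:ℝ) ((t:ℝ)*((t:ℝ)-1)) = (t:ℝ)*((t:ℝ)-1) :=
      max_eq_right (by nlinarith)
    have hinv : (2:ℝ)^(∑ i ∈ Finset.range (d'+1), t^i) * max (t:ℝ) ((t:ℝ)*((t:ℝ)-1))
        ≤ α^(t^(d'+1)) * n := by
      rw [hMeq]
      have hLpos : (0:ℝ) < (2:ℝ)^(∑ i ∈ Finset.range (d'+1), t^i)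
          * ((t:ℝ)*((t:ℝ)-1)) := by positivity
      have hRpos : (0:ℝ) < α^(t^(d'+1)) * n := by positivity
      have hlogL : Real.log ((2:ℝ)^(∑ i ∈ Finset.range (d'+1), t^i)
          * ((t:ℝ)*((t:ℝ)-1)))
          = ((∑ i ∈ Finset.range (d'+1), t^i : ℕ) : ℝ) * Real.log 2
            + Real.log ((t:ℝ)*((t:ℝ)-1)) := by
        rw [Real.log_mul (by positivity) htt1.ne', Real.log_pow]
      have hlogR : Real.log (α^(t^(d'+1)) * n)
          = ((t^(d'+1) : ℕ):ℝ) * Real.log α + x := by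
        rw [Real.log_mul (pow_ne_zero _ hα.ne') hn'.ne', Real.log_pow, hxdef]
      have hcast : ((t^(d'+1) : ℕ):ℝ) = (t:ℝ)^(d'+1) := by push_cast; rfl
      have h2 : (t:ℝ)^(d'+1) * (-Real.log α)
          ≤ (t:ℝ)^(d'+1) * (Real.log y - Real.log (t:ℝ)) :=
        mul_le_mul_of_nonneg_left hlogα (by positivity)
      have hmain2 : Real.log ((2:ℝ)^(∑ i ∈ Finset.range (d'+1), t^i)
          * ((t:ℝ)*((t:ℝ)-1))) ≤ Real.log (α^(t^(d'+1)) * n) := by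
        rw [hlogL, hlogR, hcast]
        have hxy : x = y^(d'+1) := hyx.symm
        rw [hxy]
        nlinarith [hcore, h2]
      calc (2:ℝ)^(∑ i ∈ Finset.range (d'+1), t^i) * ((t:ℝ)*((t:ℝ)-1))
          = Real.exp (Real.log ((2:ℝ)^(∑ i ∈ Finset.range (d'+1), t^i)
            * ((t:ℝ)*((t:ℝ)-1)))) := (Real.exp_log hLpos).symm
        _ ≤ Real.exp (Real.log (α^(t^(d'+1)) * n)) := Real.exp_le_exp.2 hmain2
        _ = α^(t^(d'+1)) * n := Real.exp_log hRpos
    exact key n t (d'+1) α H hα hα1 hH hinv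

end Stmt6Aux

/-- Nikiforov's explicit Kővári–Sós–Turán-type estimate: every `(d+1)`-partite
`(d+1)`-uniform hypergraph with parts of size `n` (edges being transversals
`v : Fin (d+1) → Fin n`) having at least `α·n^(d+1)` edges, `0 < α ≤ 1`, contains a
complete `(d+1)`-partite subhypergraph with all parts of size `⌊α (log n)^(1/d)⌋`. -/
theorem stmt6 (d n : ℕ) (hd : 1 ≤ d) (α : ℝ) (hα : 0 < α) (hα1 : α ≤ 1)
    (H : Finset (Fin (d+1) → Fin n)) (hH : α * (n : ℝ) ^ (d+1) ≤ H.card) :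
    ∃ P : Fin (d+1) → Finset (Fin n),
      (∀ i, (P i).card = ⌊α * Real.log n ^ ((1 : ℝ) / d)⌋₊) ∧
      ∀ v : Fin (d+1) → Fin n, (∀ i, v i ∈ P i) → v ∈ H := by
  have hx0 : 0 ≤ Real.log n := by
    rcases Nat.eq_zero_or_pos n with rfl | h
    · simp
    · exact Real.log_nonneg (by exact_mod_cast h)
  exact Stmt6Aux.main_aux d n hd α hα hα1 H hH _
    (Nat.floor_le (by positivity))
end
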